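/- For π ∈ S_n, inv(π) = min_{0 ≤ i < n} inv(π·c_n^i) if and only if π is 'heavy tailed', i.e., for every 1 ≤ k ≤ n, the prefix sum Σ_{j=1}^k π(j) ≤ k(n+1)/2. -/

import Mathlib

open Finset
open Fin.NatCast

def inversions {n : ℕ} (π : Equiv.Perm (Fin n)) : ℕ :=
  (Finset.univ.filter (fun p : Fin n × Fin n => p.1 < p.2 ∧ π p.2 < π p.1)).card

def winv {n : ℕ} (π : Equiv.Perm (Fin n)) : ℤ :=
  ∑ p ∈ Finset.univ.filter (fun p : Fin n × Fin n => p.1 < p.2 ∧ π p.2 < π p.1),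
    ((π p.1 : ℤ) - (π p.2 : ℤ))

def cwinv {n : ℕ} (π : Equiv.Perm (Fin n)) : ℤ :=
  n * inversions π - 2 * winv π

lemma card_filter_lt_val {n : ℕ} (σ : Equiv.Perm (Fin n)) (v : Fin n) :
    (univ.filter fun c => σ c < v).card = (v : ℕ) := by
  have h : (univ.filter fun c => σ c < v) = (Iio v).image σ.symm := by
    ext c
    simp [Equiv.symm_apply_eq]
  rw [h, Finset.card_image_of_injective _ σ.symm.injective, Fin.card_Iio]

lemma card_filter_gt_val {n : ℕ} (σ : Equiv.Perm (Fin n)) (v : Fin n) :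
    (univ.filter fun c => v < σ c).card = n - 1 - (v : ℕ) := by
  have h : (univ.filter fun c => v < σ c) = (Ioi v).image σ.symm := by
    ext c
    simp [Equiv.symm_apply_eq]
  rw [h, Finset.card_image_of_injective _ σ.symm.injective, Fin.card_Ioi]

lemma inversions_mul_finRotate {m : ℕ} (σ : Equiv.Perm (Fin (m + 1))) :
    inversions (σ * finRotate (m + 1)) + 2 * (σ 0 : ℕ) + 1 = inversions σ + (m + 1) := by
  classical
  have hval_add : ∀ a : Fin (m + 1), (a : ℕ) < m → ((a + 1 : Fin (m + 1)) : ℕ) = a + 1 := by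
    intro a ha
    rw [Fin.val_add_one, if_neg]
    intro h; rw [h] at ha; simp [Fin.val_last] at ha
  have hval_sub : ∀ a : Fin (m + 1), a ≠ 0 → ((a - 1 : Fin (m + 1)) : ℕ) = a - 1 := by
    intro a ha
    rw [Fin.coe_sub_one, if_neg ha]
  have hS1 : inversions (σ * finRotate (m + 1)) =
      (univ.filter (fun p : Fin (m + 1) × Fin (m + 1) =>
        p.1 < p.2 ∧ σ (p.2 + 1) < σ (p.1 + 1))).card := by
    simp [inversions, Equiv.Perm.mul_apply]
  set S1 := univ.filter (fun p : Fin (m + 1) × Fin (m + 1) =>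
      p.1 < p.2 ∧ σ (p.2 + 1) < σ (p.1 + 1)) with hS1def
  set S2 := univ.filter (fun p : Fin (m + 1) × Fin (m + 1) =>
      p.1 < p.2 ∧ σ p.2 < σ p.1) with hS2def
  have hS2 : inversions σ = S2.card := rfl
  have hsplit1 : (S1.filter (fun p => p.2 = Fin.last m)).card +
      (S1.filter (fun p => ¬ p.2 = Fin.last m)).card = S1.card :=
    Finset.card_filter_add_card_filter_not _
  have hsplit2 : (S2.filter (fun p => p.1 = 0)).card +
      (S2.filter (fun p => ¬ p.1 = 0)).card = S2.card :=
    Finset.card_filter_add_card_filter_not _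
  have hA1 : (S1.filter (fun p => p.2 = Fin.last m)).card = m - (σ 0 : ℕ) := by
    have hgt := card_filter_gt_val σ (σ 0)
    have heq : (S1.filter (fun p => p.2 = Fin.last m)).card =
        (univ.filter fun c => σ 0 < σ c).card := by
      refine Finset.card_bij' (fun p _ => p.1 + 1) (fun c _ => (c - 1, Fin.last m)) ?_ ?_ ?_ ?_
      · intro p hp
        simp only [hS1def, Finset.mem_filter, Finset.mem_univ, true_and] at hp ⊢
        obtain ⟨⟨hlt, hinv⟩, hlast⟩ := hp
        rw [hlast] at hinv
        simpa using hinv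
      · intro c hc
        simp only [Finset.mem_filter, Finset.mem_univ, true_and] at hc
        have hc0 : c ≠ 0 := by
          intro h; rw [h] at hc; exact lt_irrefl _ hc
        simp only [hS1def, Finset.mem_filter, Finset.mem_univ, true_and]
        refine ⟨⟨?_, ?_⟩, trivial⟩
        · rw [Fin.lt_def, hval_sub c hc0, Fin.val_last]
          have h1 := c.isLt
          have h2 : (c : ℕ) ≠ 0 := fun h => hc0 (Fin.ext (by simpa using h))
          omega
        · rw [sub_add_cancel]
          simpa using hc
      · intro p hp
        simp only [hS1def, Finset.mem_filter, Finset.mem_univ, true_and] at hp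
        obtain ⟨_, hlast⟩ := hp
        simp [Prod.ext_iff, hlast]
      · intro c hc
        exact sub_add_cancel c 1
    rw [heq, hgt]; omega
  have hB1 : (S2.filter (fun p => p.1 = 0)).card = (σ 0 : ℕ) := by
    have hlt := card_filter_lt_val σ (σ 0)
    have heq : (S2.filter (fun p => p.1 = 0)).card =
        (univ.filter fun c => σ c < σ 0).card := by
      refine Finset.card_bij' (fun p _ => p.2) (fun c _ => (0, c)) ?_ ?_ ?_ ?_
      · intro p hp
        simp only [hS2def, Finset.mem_filter, Finset.mem_univ, true_and] at hp ⊢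
        obtain ⟨⟨hlt', hinv⟩, h0⟩ := hp
        rw [h0] at hinv; exact hinv
      · intro c hc
        simp only [Finset.mem_filter, Finset.mem_univ, true_and] at hc
        have hc0 : c ≠ 0 := by
          intro h; rw [h] at hc; exact lt_irrefl _ hc
        simp only [hS2def, Finset.mem_filter, Finset.mem_univ, true_and]
        exact ⟨⟨Fin.pos_iff_ne_zero.mpr hc0, hc⟩, trivial⟩
      · intro p hp
        simp only [hS2def, Finset.mem_filter, Finset.mem_univ, true_and] at hp
        obtain ⟨_, h0⟩ := hp
        simp [Prod.ext_iff, h0]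
      · intro c _; rfl
    rw [heq, hlt]
  have hA2B2 : (S1.filter (fun p => ¬ p.2 = Fin.last m)).card =
      (S2.filter (fun p => ¬ p.1 = 0)).card := by
    refine Finset.card_bij' (fun p _ => (p.1 + 1, p.2 + 1)) (fun q _ => (q.1 - 1, q.2 - 1)) ?_ ?_ ?_ ?_
    · intro p hp
      simp only [hS1def, hS2def, Finset.mem_filter, Finset.mem_univ, true_and] at hp ⊢
      obtain ⟨⟨hlt', hinv⟩, hlast⟩ := hp
      have h2 : (p.2 : ℕ) < m := by
        have hb := p.2.isLt
        have hne : (p.2 : ℕ) ≠ m := fun h => hlast (Fin.ext (by simpa using h))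
        omega
      have h1 : (p.1 : ℕ) < m := lt_trans (Fin.lt_def.mp hlt') h2
      refine ⟨⟨?_, hinv⟩, ?_⟩
      · rw [Fin.lt_def, hval_add _ h1, hval_add _ h2]
        exact Nat.succ_lt_succ (Fin.lt_def.mp hlt')
      · intro h
        have hv := congrArg Fin.val h
        rw [hval_add _ h1] at hv
        simp at hv
    · intro q hq
      simp only [hS1def, hS2def, Finset.mem_filter, Finset.mem_univ, true_and] at hq ⊢
      obtain ⟨⟨hlt', hinv⟩, h0⟩ := hq
      have hq2 : q.2 ≠ 0 := by
        intro h
        rw [h] at hlt'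
        exact absurd hlt' (by simp)
      have h1v : (q.1 : ℕ) ≠ 0 := fun h => h0 (Fin.ext (by simpa using h))
      refine ⟨⟨?_, ?_⟩, ?_⟩
      · rw [Fin.lt_def, hval_sub _ h0, hval_sub _ hq2]
        have := Fin.lt_def.mp hlt'
        omega
      · rw [sub_add_cancel, sub_add_cancel]; exact hinv
      · intro h
        have hv := congrArg Fin.val h
        rw [hval_sub _ hq2, Fin.val_last] at hv
        have := q.2.isLt
        omega
    · intro p _; simp [Prod.ext_iff]
    · intro q _; simp [Prod.ext_iff]
  have hbound : (σ 0 : ℕ) ≤ m := by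
    have := (σ 0).isLt; omega
  rw [hS1, hS2]
  omega

lemma rotate_pow_zero {m : ℕ} (i : ℕ) :
    ((finRotate (m + 1)) ^ i) 0 = ((i : ℕ) : Fin (m + 1)) := by
  induction i with
  | zero => simp
  | succ i ih =>
    have h : (finRotate (m + 1)) ^ (i + 1) = finRotate (m + 1) * (finRotate (m + 1)) ^ i :=
      pow_succ' _ _
    rw [h, Equiv.Perm.mul_apply, ih, finRotate_succ_apply]
    exact (Nat.cast_add_one i).symm

lemma key_identity {n : ℕ} (π : Equiv.Perm (Fin n)) (i : ℕ) (hi : i ≤ n) :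
    (inversions (π * (finRotate n) ^ i) : ℤ) +
      2 * ∑ j ∈ Finset.univ.filter (fun j : Fin n => (j : ℕ) < i), (((π j : ℕ) : ℤ) + 1)
      = (inversions π : ℤ) + i * (n + 1) := by
  induction i with
  | zero => simp
  | succ i ih =>
    have hin : i < n := hi
    obtain ⟨m, rfl⟩ : ∃ m, n = m + 1 := ⟨n - 1, by omega⟩
    have ih' := ih (le_of_lt hin)
    have hstep := inversions_mul_finRotate (π * (finRotate (m + 1)) ^ i)
    have hfix : (π * (finRotate (m + 1)) ^ i) 0 = π ((i : ℕ) : Fin (m + 1)) := by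
      rw [Equiv.Perm.mul_apply, rotate_pow_zero]
    rw [hfix] at hstep
    have hpow : π * (finRotate (m + 1)) ^ (i + 1) =
        (π * (finRotate (m + 1)) ^ i) * finRotate (m + 1) := by
      rw [pow_succ, mul_assoc]
    have hival : (((i : ℕ) : Fin (m + 1)) : ℕ) = i := Fin.val_cast_of_lt hin
    have hsum : ∑ j ∈ Finset.univ.filter (fun j : Fin (m + 1) => (j : ℕ) < i + 1),
        (((π j : ℕ) : ℤ) + 1)
        = (∑ j ∈ Finset.univ.filter (fun j : Fin (m + 1) => (j : ℕ) < i),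
            (((π j : ℕ) : ℤ) + 1)) + (((π ((i : ℕ) : Fin (m + 1)) : ℕ) : ℤ) + 1) := by
      have hset : Finset.univ.filter (fun j : Fin (m + 1) => (j : ℕ) < i + 1)
          = insert ((i : ℕ) : Fin (m + 1))
              (Finset.univ.filter (fun j : Fin (m + 1) => (j : ℕ) < i)) := by
        ext j
        simp only [Finset.mem_filter, Finset.mem_univ, true_and, Finset.mem_insert]
        constructor
        · intro h
          rcases Nat.lt_succ_iff_lt_or_eq.mp h with h' | h'
          · exact Or.inr h'
          · exact Or.inl (Fin.ext (by rw [hival]; exact h'))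
        · rintro (h | h)
          · rw [h, hival]; omega
          · omega
      rw [hset, Finset.sum_insert (by simp [hival])]
      ring
    rw [hpow, hsum]
    have hcast : ((inversions ((π * (finRotate (m + 1)) ^ i) * finRotate (m + 1)) : ℤ)
        + 2 * ((π ((i : ℕ) : Fin (m + 1)) : ℕ) : ℤ) + 1
        = (inversions (π * (finRotate (m + 1)) ^ i) : ℤ) + (m + 1)) := by
      exact_mod_cast congrArg (fun x : ℕ => (x : ℤ)) hstep
    push_cast at hcast ih' ⊢
    linarith

lemma gauss_sum (n : ℕ) : 2 * ∑ j ∈ Finset.range n, ((j : ℤ) + 1) = n * (n + 1) := by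
  induction n with
  | zero => simp
  | succ m ih =>
    rw [Finset.sum_range_succ]
    push_cast
    push_cast at ih
    linarith

lemma total_sum {n : ℕ} (π : Equiv.Perm (Fin n)) :
    2 * ∑ j : Fin n, (((π j : ℕ) : ℤ) + 1) = n * (n + 1) := by
  rw [Equiv.sum_comp π (fun j : Fin n => ((j : ℕ) : ℤ) + 1)]
  rw [Fin.sum_univ_eq_sum_range (fun j => ((j : ℕ) : ℤ) + 1) n]
  exact gauss_sum n

theorem inv_eq_min_iff_heavy_tailed {n : ℕ} (π : Equiv.Perm (Fin n)) :
    (∀ i, i < n → inversions π ≤ inversions (π * (finRotate n) ^ i)) ↔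
    (∀ k, 1 ≤ k → k ≤ n →
      2 * ∑ j ∈ Finset.univ.filter (fun j : Fin n => (j : ℕ) < k), ((π j : ℕ) + 1)
        ≤ k * (n + 1)) := by
  constructor
  · intro h k hk1 hkn
    rcases lt_or_eq_of_le hkn with hkn' | rfl
    · have hmin := h k hkn'
      have hkey := key_identity π k (le_of_lt hkn')
      have hz : 2 * (∑ j ∈ Finset.univ.filter (fun j : Fin n => (j : ℕ) < k),
          (((π j : ℕ) : ℤ) + 1)) ≤ (k : ℤ) * (n + 1) := by
        have hm : (inversions π : ℤ) ≤ inversions (π * (finRotate n) ^ k) := by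
          exact_mod_cast hmin
        linarith
      have hfin : ((2 * ∑ j ∈ Finset.univ.filter (fun j : Fin n => (j : ℕ) < k),
          ((π j : ℕ) + 1) : ℕ) : ℤ) ≤ ((k * (n + 1) : ℕ) : ℤ) := by
        push_cast
        push_cast at hz
        linarith
      exact_mod_cast hfin
    · have hfull : Finset.univ.filter (fun j : Fin k => (j : ℕ) < k) = Finset.univ := by
        ext j; simp [j.isLt]
      have hfin : ((2 * ∑ j ∈ Finset.univ.filter (fun j : Fin k => (j : ℕ) < k),
          ((π j : ℕ) + 1) : ℕ) : ℤ) = ((k * (k + 1) : ℕ) : ℤ) := by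
        rw [hfull]
        have := total_sum π
        push_cast
        push_cast at this
        linarith
      exact le_of_eq (by exact_mod_cast hfin)
  · intro h i hi
    rcases Nat.eq_zero_or_pos i with rfl | hi1
    · simp
    · have hheavy := h i hi1 (le_of_lt hi)
      have hkey := key_identity π i (le_of_lt hi)
      have hz : 2 * (∑ j ∈ Finset.univ.filter (fun j : Fin n => (j : ℕ) < i),
          (((π j : ℕ) : ℤ) + 1)) ≤ (i : ℤ) * (n + 1) := by
        have hfin : ((2 * ∑ j ∈ Finset.univ.filter (fun j : Fin n => (j : ℕ) < i),
            ((π j : ℕ) + 1) : ℕ) : ℤ) ≤ ((i * (n + 1) : ℕ) : ℤ) := by exact_mod_cast hheavy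
        push_cast at hfin
        linarith
      have hm : (inversions π : ℤ) ≤ (inversions (π * (finRotate n) ^ i) : ℤ) := by linarith
      exact_mod_cast hm
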